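/- For a locally finite non-negative Borel measure μ on ℝⁿ₊ and l ≥ 0 with ∫(1+|x|)μ(dx) < ∞, the resource distribution problem (maximize ∫ u dμ over measurable 0 ≤ u ≤ 1 with ∫ xᵢ u(x) μ(dx) ≤ lᵢ for all i) has a solution. -/

import Mathlib

open MeasureTheory ENNReal InnerProductSpace Metric

local notation "⟪" x ", " y "⟫" => @inner ℝ _ _ x y

lemma aux_inner_weak_continuous {H : Type*} [NormedAddCommGroup H] [InnerProductSpace ℝ H]
    (G : H) :
    Continuous fun U : WeakSpace ℝ H => ⟪G, (toWeakSpace ℝ H).symm U⟫ :=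
  WeakBilin.eval_continuous (topDualPairing ℝ H).flip (innerSL ℝ G)

lemma aux_isCompact_weak_closedBall {H : Type*} [NormedAddCommGroup H] [InnerProductSpace ℝ H]
    [CompleteSpace H] (r : ℝ) :
    IsCompact (toWeakSpace ℝ H '' Metric.closedBall 0 r) := by
  have hc : IsCompact (WeakDual.toStrongDual ⁻¹' Metric.closedBall (toDual ℝ H 0) r) :=
    WeakDual.isCompact_closedBall (𝕜 := ℝ) (toDual ℝ H 0) r
  set h : WeakDual ℝ H → WeakSpace ℝ H :=
    fun φ => toWeakSpace ℝ H ((toDual ℝ H).symm φ) with hh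
  have hcont : Continuous h := by
    apply WeakBilin.continuous_of_continuous_eval
    intro f
    have key : (fun φ : WeakDual ℝ H => (topDualPairing ℝ H).flip (h φ) f)
        = fun φ : WeakDual ℝ H => φ ((toDual ℝ H).symm f) := by
      funext φ
      show f ((toDual ℝ H).symm φ) = φ ((toDual ℝ H).symm f)
      conv_lhs => rw [← (toDual ℝ H).apply_symm_apply f]
      rw [toDual_apply_apply, real_inner_comm, ← toDual_apply_apply]
      exact congrArg (fun ψ : StrongDual ℝ H => ψ ((toDual ℝ H).symm f)) ((toDual ℝ H).apply_symm_apply (WeakDual.toStrongDual φ))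
    rw [key]
    exact WeakDual.eval_continuous _
  have himg : h '' (WeakDual.toStrongDual ⁻¹' Metric.closedBall (toDual ℝ H 0) r)
      = toWeakSpace ℝ H '' Metric.closedBall 0 r := by
    ext U
    constructor
    · rintro ⟨φ, hφ, rfl⟩
      refine ⟨(toDual ℝ H).symm φ, ?_, rfl⟩
      have h1 : dist (WeakDual.toStrongDual φ) (toDual ℝ H 0) ≤ r := hφ
      rw [Metric.mem_closedBall]
      calc dist ((toDual ℝ H).symm φ) 0
          = dist ((toDual ℝ H).symm φ) ((toDual ℝ H).symm (toDual ℝ H 0)) := by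
            rw [(toDual ℝ H).symm_apply_apply]
        _ = dist (WeakDual.toStrongDual φ) (toDual ℝ H 0) := (toDual ℝ H).symm.dist_map _ _
        _ ≤ r := h1
    · rintro ⟨x, hx, rfl⟩
      refine ⟨toDual ℝ H x, ?_, by simp [hh]⟩
      show dist (WeakDual.toStrongDual (toDual ℝ H x)) (toDual ℝ H 0) ≤ r
      have h2 : dist (toDual ℝ H x) (toDual ℝ H 0) = dist x 0 := (toDual ℝ H).dist_map _ _
      exact h2.le.trans hx
  rw [← himg]
  exact hc.image hcont

lemma aux_exists_maximizer {α : Type*} [MeasurableSpace α] (ν : Measure α) [IsFiniteMeasure ν]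
    (G₀ : Lp ℝ 2 ν) {m : ℕ} (G : Fin m → Lp ℝ 2 ν) (l : Fin m → ℝ) (hl : ∀ i, 0 ≤ l i) :
    ∃ U₀ : Lp ℝ 2 ν, (∀ᵐ x ∂ν, U₀ x ∈ Set.Icc (0:ℝ) 1) ∧ (∀ i, ⟪G i, U₀⟫ ≤ l i) ∧
      ∀ V : Lp ℝ 2 ν, (∀ᵐ x ∂ν, V x ∈ Set.Icc (0:ℝ) 1) → (∀ i, ⟪G i, V⟫ ≤ l i) →
        ⟪G₀, V⟫ ≤ ⟪G₀, U₀⟫ := by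
  classical
  -- any L² element is integrable
  have hint : ∀ U : Lp ℝ 2 ν, Integrable U ν := fun U =>
    memLp_one_iff_integrable.mp ((Lp.memLp U).mono_exponent one_le_two)
  -- inner product against an indicator is a set integral
  have inner_ind : ∀ (A : Set α) (hA : MeasurableSet A) (U : Lp ℝ 2 ν),
      ⟪indicatorConstLp 2 hA (measure_ne_top ν A) (1:ℝ), U⟫ = ∫ x in A, U x ∂ν := by
    intro A hA U
    rw [MeasureTheory.L2.inner_indicatorConstLp_eq_setIntegral_inner]
    simp [RCLike.inner_apply]
  -- characterize [0,1]-valued elements via set integrals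
  have hS_iff : ∀ U : Lp ℝ 2 ν, (∀ᵐ x ∂ν, U x ∈ Set.Icc (0:ℝ) 1) ↔
      ∀ (A : Set α) (hA : MeasurableSet A),
      0 ≤ ⟪indicatorConstLp 2 hA (measure_ne_top ν A) (1:ℝ), U⟫ ∧
      ⟪indicatorConstLp 2 hA (measure_ne_top ν A) (1:ℝ), U⟫ ≤ (ν A).toReal := by
    intro U
    constructor
    · intro hU A hA
      rw [inner_ind A hA U]
      have h0 : 0 ≤ᵐ[ν] ⇑U := hU.mono (fun x hx => hx.1)
      have h1 : ⇑U ≤ᵐ[ν] fun _ => (1:ℝ) := hU.mono (fun x hx => hx.2)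
      constructor
      · exact setIntegral_nonneg_ae hA (h0.mono fun x hx _ => hx)
      · calc ∫ x in A, U x ∂ν ≤ ∫ _ in A, (1:ℝ) ∂ν :=
              integral_mono_ae (hint U).integrableOn (integrable_const 1).integrableOn
                (ae_restrict_of_ae h1)
          _ = (ν A).toReal := by simp [Measure.real]
    · intro h
      have h0 : 0 ≤ᵐ[ν] ⇑U := by
        refine ae_nonneg_of_forall_setIntegral_nonneg (hint U) (fun s hs _ => ?_)
        rw [← inner_ind s hs U]; exact (h s hs).1
      have h1 : 0 ≤ᵐ[ν] (fun x => 1 - U x) := by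
        refine ae_nonneg_of_forall_setIntegral_nonneg ((integrable_const 1).sub (hint U))
          (fun s hs _ => ?_)
        rw [integral_sub (integrable_const 1).integrableOn (hint U).integrableOn]
        rw [← inner_ind s hs U]
        simp only [integral_const, smul_eq_mul, mul_one]
        have := (h s hs).2
        simp only [Measure.real, Measure.restrict_apply_univ]
        linarith
      filter_upwards [h0, h1] with x hx0 hx1
      exact ⟨hx0, by simpa [sub_nonneg] using hx1⟩
  have h0F' : (∀ᵐ x ∂ν, ((toWeakSpace ℝ (Lp ℝ 2 ν)).symm 0 : Lp ℝ 2 ν) x ∈ Set.Icc (0:ℝ) 1) ∧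
      ∀ i, ⟪G i, (toWeakSpace ℝ (Lp ℝ 2 ν)).symm 0⟫ ≤ l i := by
    have he0 : (toWeakSpace ℝ (Lp ℝ 2 ν)).symm 0 = (0 : Lp ℝ 2 ν) := map_zero _
    rw [he0]
    constructor
    · filter_upwards [Lp.coeFn_zero ℝ 2 ν] with x hx
      rw [hx]; exact ⟨le_refl _, zero_le_one⟩
    · intro i
      rw [inner_zero_right]
      exact hl i
  have hF'closed : IsClosed {U : WeakSpace ℝ (Lp ℝ 2 ν) |
      (∀ᵐ x ∂ν, ((toWeakSpace ℝ (Lp ℝ 2 ν)).symm U : Lp ℝ 2 ν) x ∈ Set.Icc (0:ℝ) 1) ∧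
      ∀ i, ⟪G i, (toWeakSpace ℝ (Lp ℝ 2 ν)).symm U⟫ ≤ l i} := by
    have : {U : WeakSpace ℝ (Lp ℝ 2 ν) |
        (∀ᵐ x ∂ν, ((toWeakSpace ℝ (Lp ℝ 2 ν)).symm U : Lp ℝ 2 ν) x ∈ Set.Icc (0:ℝ) 1) ∧
        ∀ i, ⟪G i, (toWeakSpace ℝ (Lp ℝ 2 ν)).symm U⟫ ≤ l i} =
        (⋂ (A : Set α) (hA : MeasurableSet A),
        {U : WeakSpace ℝ (Lp ℝ 2 ν) |
          0 ≤ ⟪indicatorConstLp 2 hA (measure_ne_top ν A) (1:ℝ),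
            (toWeakSpace ℝ (Lp ℝ 2 ν)).symm U⟫} ∩
        {U : WeakSpace ℝ (Lp ℝ 2 ν) |
          ⟪indicatorConstLp 2 hA (measure_ne_top ν A) (1:ℝ),
            (toWeakSpace ℝ (Lp ℝ 2 ν)).symm U⟫ ≤ (ν A).toReal}) ∩
        ⋂ i : Fin m, {U : WeakSpace ℝ (Lp ℝ 2 ν) |
          ⟪G i, (toWeakSpace ℝ (Lp ℝ 2 ν)).symm U⟫ ≤ l i} := by
      ext U
      simp only [Set.mem_setOf_eq, Set.mem_inter_iff, Set.mem_iInter, Set.mem_setOf_eq,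
        hS_iff ((toWeakSpace ℝ (Lp ℝ 2 ν)).symm U)]
    rw [this]
    refine IsClosed.inter ?_ (isClosed_iInter fun i => ?_)
    · refine isClosed_iInter fun A => isClosed_iInter fun hA => IsClosed.inter ?_ ?_
      · exact isClosed_le continuous_const (aux_inner_weak_continuous _)
      · exact isClosed_le (aux_inner_weak_continuous _) continuous_const
    · exact isClosed_le (aux_inner_weak_continuous _) continuous_const
  set R : ℝ := (measureUnivNNReal ν : ℝ) ^ ((2:ℝ≥0∞).toReal)⁻¹ * 1 with hR
  have hF'sub : {U : WeakSpace ℝ (Lp ℝ 2 ν) |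
      (∀ᵐ x ∂ν, ((toWeakSpace ℝ (Lp ℝ 2 ν)).symm U : Lp ℝ 2 ν) x ∈ Set.Icc (0:ℝ) 1) ∧
      ∀ i, ⟪G i, (toWeakSpace ℝ (Lp ℝ 2 ν)).symm U⟫ ≤ l i} ⊆
      toWeakSpace ℝ (Lp ℝ 2 ν) '' Metric.closedBall (0 : Lp ℝ 2 ν) R := by
    intro U hU
    refine ⟨(toWeakSpace ℝ (Lp ℝ 2 ν)).symm U, ?_, by simp⟩
    rw [mem_closedBall, dist_zero_right]
    refine Lp.norm_le_of_ae_bound zero_le_one (hU.1.mono fun x hx => ?_)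
    rw [Real.norm_eq_abs, abs_le]
    exact ⟨by linarith [hx.1], hx.2⟩
  have hF'cpt : IsCompact {U : WeakSpace ℝ (Lp ℝ 2 ν) |
      (∀ᵐ x ∂ν, ((toWeakSpace ℝ (Lp ℝ 2 ν)).symm U : Lp ℝ 2 ν) x ∈ Set.Icc (0:ℝ) 1) ∧
      ∀ i, ⟪G i, (toWeakSpace ℝ (Lp ℝ 2 ν)).symm U⟫ ≤ l i} :=
    (aux_isCompact_weak_closedBall R).of_isClosed_subset hF'closed hF'sub
  obtain ⟨Us, hUsF', hmax⟩ := hF'cpt.exists_isMaxOn ⟨0, h0F'⟩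
    ((aux_inner_weak_continuous G₀).continuousOn)
  refine ⟨(toWeakSpace ℝ (Lp ℝ 2 ν)).symm Us, hUsF'.1, hUsF'.2, fun V hV1 hV2 => ?_⟩
  have hVF' : toWeakSpace ℝ (Lp ℝ 2 ν) V ∈ {U : WeakSpace ℝ (Lp ℝ 2 ν) |
      (∀ᵐ x ∂ν, ((toWeakSpace ℝ (Lp ℝ 2 ν)).symm U : Lp ℝ 2 ν) x ∈ Set.Icc (0:ℝ) 1) ∧
      ∀ i, ⟪G i, (toWeakSpace ℝ (Lp ℝ 2 ν)).symm U⟫ ≤ l i} := by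
    simp only [Set.mem_setOf_eq, LinearEquiv.symm_apply_apply]
    exact ⟨hV1, hV2⟩
  have := hmax hVF'
  simpa using this

/-- Existence of a solution of the Houthakker-Johansen resource distribution problem:
maximize `∫ u dμ` over measurable `0 ≤ u ≤ 1` with `∫ xᵢ u(x) μ(dx) ≤ lᵢ`. -/
theorem resource_distribution_has_solution
    (n : ℕ) (μ : Measure (Fin n → ℝ))
    (hsupp : ∀ᵐ x ∂μ, ∀ i, 0 ≤ x i)
    (hfin : ∫⁻ x, ENNReal.ofReal (1 + ‖x‖) ∂μ < ⊤)
    (l : Fin n → ℝ) (hl : ∀ i, 0 ≤ l i) :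
    ∃ u₀ : (Fin n → ℝ) → ℝ≥0∞, Measurable u₀ ∧ (∀ᵐ x ∂μ, u₀ x ≤ 1) ∧
      (∀ i, ∫⁻ x, ENNReal.ofReal (x i) * u₀ x ∂μ ≤ ENNReal.ofReal (l i)) ∧
      ∀ u : (Fin n → ℝ) → ℝ≥0∞, Measurable u → (∀ᵐ x ∂μ, u x ≤ 1) →
        (∀ i, ∫⁻ x, ENNReal.ofReal (x i) * u x ∂μ ≤ ENNReal.ofReal (l i)) →
        ∫⁻ x, u x ∂μ ≤ ∫⁻ x, u₀ x ∂μ := by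
  classical
  -- the weight function and the auxiliary finite measure
  set w : (Fin n → ℝ) → ℝ≥0∞ := fun x => ENNReal.ofReal (1 + ‖x‖) with hw
  have hx_pos : ∀ x : Fin n → ℝ, (0:ℝ) < 1 + ‖x‖ := fun x => by positivity
  have hw_meas : Measurable w := (measurable_const.add continuous_norm.measurable).ennreal_ofReal
  have hw_ne0 : ∀ x, w x ≠ 0 := fun x => (ENNReal.ofReal_pos.2 (hx_pos x)).ne'
  have hw_netop : ∀ x, w x ≠ ⊤ := fun _ => ofReal_ne_top
  set ν : Measure (Fin n → ℝ) := μ.withDensity w with hν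
  haveI hνfin : IsFiniteMeasure ν := ⟨by
    rw [hν, withDensity_apply _ MeasurableSet.univ, setLIntegral_univ]; exact hfin⟩
  have hνμ : ν ≪ μ := withDensity_absolutelyContinuous μ w
  have hμν : μ ≪ ν := by
    have h2 : ν.withDensity (fun x => (w x)⁻¹) = μ :=
      withDensity_inv_same hw_meas (ae_of_all _ hw_ne0) (ae_of_all _ hw_netop)
    rw [← h2]; exact withDensity_absolutelyContinuous _ _
  have hsupp_ν : ∀ᵐ x ∂ν, ∀ i, 0 ≤ x i := hνμ.ae_le hsupp
  -- the fundamental change-of-measure identity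
  have hlin : ∀ f : (Fin n → ℝ) → ℝ≥0∞, Measurable f →
      ∫⁻ x, f x ∂μ = ∫⁻ x, f x * (w x)⁻¹ ∂ν := by
    intro f hf
    rw [hν, show (fun x => f x * (w x)⁻¹) = f * w⁻¹ from rfl, lintegral_withDensity_eq_lintegral_mul _ hw_meas (hf.mul hw_meas.inv)]
    refine lintegral_congr fun x => ?_
    show f x = w x * (f x * (w x)⁻¹)
    rw [mul_comm (w x), mul_assoc, ENNReal.inv_mul_cancel (hw_ne0 x) (hw_netop x), mul_one]
  -- the test functions
  set g0 : (Fin n → ℝ) → ℝ := fun x => (1 + ‖x‖)⁻¹ with hg0def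
  set g : Fin n → (Fin n → ℝ) → ℝ := fun i x => x i * (1 + ‖x‖)⁻¹ with hgdef
  have hg0_meas : Measurable g0 := (measurable_const.add continuous_norm.measurable).inv
  have hgi_meas : ∀ i, Measurable (g i) := fun i => (measurable_pi_apply i).mul hg0_meas
  have hg0_nonneg : ∀ x, 0 ≤ g0 x := fun x => inv_nonneg.2 (hx_pos x).le
  have hg0_bd : ∀ x, |g0 x| ≤ 1 := by
    intro x
    rw [abs_of_nonneg (hg0_nonneg x)]
    rw [inv_le_one_iff₀]
    right; linarith [norm_nonneg x]
  have hgi_bd : ∀ i x, |g i x| ≤ 1 := by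
    intro i x
    have h1 : |x i| ≤ 1 + ‖x‖ := by
      have := norm_le_pi_norm x i
      simpa using this.trans (by linarith)
    have : |g i x| = |x i| * (1 + ‖x‖)⁻¹ := by
      rw [hgdef]; simp [abs_mul, abs_of_nonneg (hg0_nonneg x), (hx_pos x).le]
    rw [this]
    calc |x i| * (1 + ‖x‖)⁻¹ ≤ (1 + ‖x‖) * (1 + ‖x‖)⁻¹ :=
          mul_le_mul_of_nonneg_right h1 (inv_nonneg.2 (hx_pos x).le)
      _ = 1 := mul_inv_cancel₀ (hx_pos x).ne'
  have hgi_nonneg : ∀ᵐ x ∂ν, ∀ i, 0 ≤ g i x := by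
    filter_upwards [hsupp_ν] with x hx i
    exact mul_nonneg (hx i) (inv_nonneg.2 (hx_pos x).le)
  -- membership in L²
  have hmem : ∀ (f : (Fin n → ℝ) → ℝ), Measurable f → (∀ᵐ x ∂ν, |f x| ≤ 1) → MemLp f 2 ν := by
    intro f hf hb
    refine (memLp_top_of_bound hf.aestronglyMeasurable 1 ?_).mono_exponent le_top
    filter_upwards [hb] with x hx
    rwa [Real.norm_eq_abs]
  have hG0mem : MemLp g0 2 ν := hmem g0 hg0_meas (ae_of_all _ fun x => hg0_bd x)
  have hGimem : ∀ i, MemLp (g i) 2 ν := fun i => hmem (g i) (hgi_meas i)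
    (ae_of_all _ fun x => hgi_bd i x)
  set G0 : Lp ℝ 2 ν := hG0mem.toLp g0 with hG0
  set Gi : Fin n → Lp ℝ 2 ν := fun i => (hGimem i).toLp (g i) with hGi
  -- inner products as integrals
  have hinner : ∀ (f : (Fin n → ℝ) → ℝ) (hf : MemLp f 2 ν) (V : Lp ℝ 2 ν),
      ⟪hf.toLp f, V⟫ = ∫ x, f x * V x ∂ν := by
    intro f hf V
    rw [MeasureTheory.L2.inner_def]
    refine integral_congr_ae ?_
    filter_upwards [hf.coeFn_toLp] with x hx
    rw [hx]; simp [RCLike.inner_apply, mul_comm]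
  -- conversion between Bochner and lower integrals
  have hconv : ∀ (f : (Fin n → ℝ) → ℝ), Measurable f → (∀ᵐ x ∂ν, |f x| ≤ 1) →
      (∀ᵐ x ∂ν, 0 ≤ f x) →
      ∀ (v : (Fin n → ℝ) → ℝ), Measurable v → (∀ᵐ x ∂ν, v x ∈ Set.Icc (0:ℝ) 1) →
      ∫⁻ x, ENNReal.ofReal (f x) * ENNReal.ofReal (v x) ∂ν
        = ENNReal.ofReal (∫ x, f x * v x ∂ν) := by
    intro f hf hfb hf0 v hv hv01
    have hbd : ∀ᵐ x ∂ν, ‖f x * v x‖ ≤ 1 := by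
      filter_upwards [hfb, hv01] with x hx1 hx2
      rw [Real.norm_eq_abs, abs_mul]
      have : |v x| ≤ 1 := by rw [abs_le]; exact ⟨by linarith [hx2.1], hx2.2⟩
      calc |f x| * |v x| ≤ 1 * 1 := mul_le_mul hx1 this (abs_nonneg _) zero_le_one
        _ = 1 := one_mul 1
    have hint : Integrable (fun x => f x * v x) ν :=
      memLp_one_iff_integrable.mp
        ((memLp_top_of_bound (hf.mul hv).aestronglyMeasurable 1 hbd).mono_exponent le_top)
    have hnn : 0 ≤ᵐ[ν] fun x => f x * v x := by
      filter_upwards [hf0, hv01] with x hx1 hx2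
      exact mul_nonneg hx1 hx2.1
    calc ∫⁻ x, ENNReal.ofReal (f x) * ENNReal.ofReal (v x) ∂ν
        = ∫⁻ x, ENNReal.ofReal (f x * v x) ∂ν := by
          refine lintegral_congr_ae ?_
          filter_upwards [hf0] with x hx
          rw [ENNReal.ofReal_mul hx]
      _ = ENNReal.ofReal (∫ x, f x * v x ∂ν) :=
          (ofReal_integral_eq_lintegral_ofReal hint hnn).symm
  -- the master computation, part A: the objective
  have hA : ∀ (v : (Fin n → ℝ) → ℝ), Measurable v → (∀ᵐ x ∂ν, v x ∈ Set.Icc (0:ℝ) 1) →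
      ∫⁻ x, ENNReal.ofReal (v x) ∂μ = ENNReal.ofReal (∫ x, g0 x * v x ∂ν) := by
    intro v hv hv01
    rw [hlin _ hv.ennreal_ofReal]
    rw [← hconv g0 hg0_meas (ae_of_all _ fun x => hg0_bd x) (ae_of_all _ hg0_nonneg) v hv hv01]
    refine lintegral_congr fun x => ?_
    rw [mul_comm]
    congr 1
    rw [← ENNReal.ofReal_inv_of_pos (hx_pos x)]
  -- the master computation, part B: the constraints
  have hB : ∀ (v : (Fin n → ℝ) → ℝ), Measurable v → (∀ᵐ x ∂ν, v x ∈ Set.Icc (0:ℝ) 1) →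
      ∀ i, ∫⁻ x, ENNReal.ofReal (x i) * ENNReal.ofReal (v x) ∂μ
        = ENNReal.ofReal (∫ x, g i x * v x ∂ν) := by
    intro v hv hv01 i
    rw [hlin (fun x => ENNReal.ofReal (x i) * ENNReal.ofReal (v x)) (((measurable_pi_apply i).ennreal_ofReal).mul hv.ennreal_ofReal)]
    rw [← hconv (g i) (hgi_meas i) (ae_of_all _ fun x => hgi_bd i x)
          (hgi_nonneg.mono fun x hx => hx i) v hv hv01]
    refine lintegral_congr_ae ?_
    filter_upwards [hsupp_ν] with x hx
    have : ENNReal.ofReal (g i x) = ENNReal.ofReal (x i) * (w x)⁻¹ := by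
      rw [hgdef]
      rw [ENNReal.ofReal_mul (hx i), ENNReal.ofReal_inv_of_pos (hx_pos x)]
    rw [this, mul_comm (ENNReal.ofReal (x i) * (w x)⁻¹), mul_comm (ENNReal.ofReal (x i))]
    ring
  -- obtain the maximizer in L²
  obtain ⟨U₀L, hU01, hU0c, hU0max⟩ := aux_exists_maximizer ν G0 Gi l hl
  -- a measurable representative
  set u₀r : (Fin n → ℝ) → ℝ := (Lp.aestronglyMeasurable U₀L).mk U₀L with hu₀r
  have hu₀r_meas : Measurable u₀r :=
    (Lp.aestronglyMeasurable U₀L).stronglyMeasurable_mk.measurable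
  have hu₀r_eq : ⇑U₀L =ᵐ[ν] u₀r := (Lp.aestronglyMeasurable U₀L).ae_eq_mk
  have hu₀r01 : ∀ᵐ x ∂ν, u₀r x ∈ Set.Icc (0:ℝ) 1 := by
    filter_upwards [hU01, hu₀r_eq] with x hx1 hx2
    rw [← hx2]; exact hx1
  refine ⟨fun x => ENNReal.ofReal (u₀r x), hu₀r_meas.ennreal_ofReal, ?_, ?_, ?_⟩
  · -- u₀ ≤ 1 a.e.
    have : ∀ᵐ x ∂μ, u₀r x ∈ Set.Icc (0:ℝ) 1 := hμν.ae_le hu₀r01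
    filter_upwards [this] with x hx
    exact ENNReal.ofReal_le_one.2 hx.2
  · -- constraints
    intro i
    rw [hB u₀r hu₀r_meas hu₀r01 i]
    refine ENNReal.ofReal_le_ofReal ?_
    have h1 : ∫ x, g i x * u₀r x ∂ν = ⟪Gi i, U₀L⟫ := by
      rw [hGi, hinner (g i) (hGimem i) U₀L]
      refine integral_congr_ae ?_
      filter_upwards [hu₀r_eq] with x hx
      rw [hx]
    rw [h1]
    exact hU0c i
  · -- optimality
    intro u hu_meas hu_le1 hu_constr
    set v : (Fin n → ℝ) → ℝ := fun x => (u x).toReal with hvdef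
    have hv_meas : Measurable v := hu_meas.ennreal_toReal
    have hu_le1ν : ∀ᵐ x ∂ν, u x ≤ 1 := hνμ.ae_le hu_le1
    have hv01 : ∀ᵐ x ∂ν, v x ∈ Set.Icc (0:ℝ) 1 := by
      filter_upwards [hu_le1ν] with x hx
      exact ⟨ENNReal.toReal_nonneg, by
        simpa using ENNReal.toReal_mono ENNReal.one_ne_top hx⟩
    have hveqν : ∀ᵐ x ∂ν, ENNReal.ofReal (v x) = u x := by
      filter_upwards [hu_le1ν] with x hx
      exact ENNReal.ofReal_toReal (hx.trans_lt ENNReal.one_lt_top).ne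
    have hveqμ : ∀ᵐ x ∂μ, ENNReal.ofReal (v x) = u x := by
      filter_upwards [hu_le1] with x hx
      exact ENNReal.ofReal_toReal (hx.trans_lt ENNReal.one_lt_top).ne
    have hvmem : MemLp v 2 ν := hmem v hv_meas (hv01.mono fun x hx => by
      rw [abs_le]; exact ⟨by linarith [hx.1], hx.2⟩)
    set V : Lp ℝ 2 ν := hvmem.toLp v with hV
    have hVIcc : ∀ᵐ x ∂ν, V x ∈ Set.Icc (0:ℝ) 1 := by
      filter_upwards [hvmem.coeFn_toLp, hv01] with x hx1 hx2
      rw [hx1]; exact hx2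
    have hVinner : ∀ (f : (Fin n → ℝ) → ℝ) (hf : MemLp f 2 ν),
        ⟪hf.toLp f, V⟫ = ∫ x, f x * v x ∂ν := by
      intro f hf
      rw [hinner f hf V]
      refine integral_congr_ae ?_
      filter_upwards [hvmem.coeFn_toLp] with x hx
      rw [hx]
    have hVconstr : ∀ i, ⟪Gi i, V⟫ ≤ l i := by
      intro i
      rw [hGi, hVinner (g i) (hGimem i)]
      refine (ENNReal.ofReal_le_ofReal_iff (hl i)).mp ?_
      rw [← hB v hv_meas hv01 i]
      calc ∫⁻ x, ENNReal.ofReal (x i) * ENNReal.ofReal (v x) ∂μ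
          = ∫⁻ x, ENNReal.ofReal (x i) * u x ∂μ := by
            refine lintegral_congr_ae ?_
            filter_upwards [hveqμ] with x hx
            rw [hx]
        _ ≤ ENNReal.ofReal (l i) := hu_constr i
    have hfinal : ⟪G0, V⟫ ≤ ⟪G0, U₀L⟫ := hU0max V hVIcc hVconstr
    calc ∫⁻ x, u x ∂μ = ∫⁻ x, ENNReal.ofReal (v x) ∂μ := by
          refine lintegral_congr_ae ?_
          filter_upwards [hveqμ] with x hx
          rw [hx]
      _ = ENNReal.ofReal (∫ x, g0 x * v x ∂ν) := hA v hv_meas hv01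
      _ = ENNReal.ofReal ⟪G0, V⟫ := by rw [hG0, hVinner g0 hG0mem]
      _ ≤ ENNReal.ofReal ⟪G0, U₀L⟫ := ENNReal.ofReal_le_ofReal hfinal
      _ = ENNReal.ofReal (∫ x, g0 x * u₀r x ∂ν) := by
          rw [hG0, hinner g0 hG0mem U₀L]
          congr 1
          refine integral_congr_ae ?_
          filter_upwards [hu₀r_eq] with x hx
          rw [hx]
      _ = ∫⁻ x, ENNReal.ofReal (u₀r x) ∂μ := (hA u₀r hu₀r_meas hu₀r01).symm
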